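/- Let A be a unital Banach algebra. If multiplication in A, regarded as the map A × A → A, (x, y) ↦ xy, is an open mapping, then the set of invertible elements of A is dense in A (i.e., A has topological stable rank 1). -/

import Mathlib

open Pointwise

/-- If multiplication in a unital Banach algebra `A` is an open mapping, then the
invertible elements are dense in `A`, i.e. `A` has topological stable rank 1. -/
theorem tsr_one_of_open_multiplication
    {𝕜 : Type*} [RCLike 𝕜] {A : Type*} [NormedRing A] [NormedAlgebra 𝕜 A]
    [CompleteSpace A]
    (h : ∀ x y : A, ∀ ε > 0, ∃ δ > 0,
        Metric.ball (x * y) δ ⊆ Metric.ball x ε * Metric.ball y ε) :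
    Dense {a : A | IsUnit a} := by
  rcases subsingleton_or_nontrivial A with hs | hnt
  · have huniv : {a : A | IsUnit a} = Set.univ := by
      ext a
      simp [Subsingleton.elim a 1]
    rw [huniv]
    exact dense_univ
  rw [Metric.dense_iff]
  intro a r hr
  have h1 : (0:ℝ) < ‖(1:A)‖ := norm_pos_iff.mpr one_ne_zero
  -- Step 1: find `u` near `a` with a right inverse `w`.
  obtain ⟨δ, hδ, hsub⟩ := h a 0 (r/2) (by positivity)
  rw [mul_zero] at hsub
  have hcpos : (0:ℝ) < δ / (2 * ‖(1:A)‖) := by positivity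
  set c : 𝕜 := ((δ / (2 * ‖(1:A)‖) : ℝ) : 𝕜) with hc
  have hc0 : c ≠ 0 := by
    rw [hc]
    exact_mod_cast ne_of_gt hcpos
  have hnorm : algebraMap 𝕜 A c ∈ Metric.ball (0:A) δ := by
    rw [Metric.mem_ball, dist_zero_right, norm_algebraMap, hc, RCLike.norm_ofReal,
      abs_of_pos hcpos]
    have heq : δ / (2 * ‖(1:A)‖) * ‖(1:A)‖ = δ / 2 := by
      field_simp
    rw [heq]
    linarith
  obtain ⟨u, hu, v, hv, huv⟩ := hsub hnorm
  have huv : u * v = algebraMap 𝕜 A c := huv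
  set w : A := v * algebraMap 𝕜 A c⁻¹ with hw
  have huw : u * w = 1 := by
    rw [hw, ← mul_assoc, huv, ← map_mul, mul_inv_cancel₀ hc0, map_one]
  -- Step 2: find `u'` near `u` with a left inverse; it is then a unit.
  have hε'pos : (0:ℝ) < min (r/2) (1/(‖w‖+1)) := by positivity
  obtain ⟨δ', hδ', hsub'⟩ := h 0 u (min (r/2) (1/(‖w‖+1))) hε'pos
  rw [zero_mul] at hsub'
  have hc'pos : (0:ℝ) < δ' / (2 * ‖(1:A)‖) := by positivity
  set c' : 𝕜 := ((δ' / (2 * ‖(1:A)‖) : ℝ) : 𝕜) with hc'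
  have hc'0 : c' ≠ 0 := by
    rw [hc']
    exact_mod_cast ne_of_gt hc'pos
  have hnorm' : algebraMap 𝕜 A c' ∈ Metric.ball (0:A) δ' := by
    rw [Metric.mem_ball, dist_zero_right, norm_algebraMap, hc', RCLike.norm_ofReal,
      abs_of_pos hc'pos]
    have heq : δ' / (2 * ‖(1:A)‖) * ‖(1:A)‖ = δ' / 2 := by
      field_simp
    rw [heq]
    linarith
  obtain ⟨v', hv', u', hu', hvu⟩ := hsub' hnorm'
  have hvu : v' * u' = algebraMap 𝕜 A c' := hvu
  -- left inverse of u'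
  have hleft : (algebraMap 𝕜 A c'⁻¹ * v') * u' = 1 := by
    rw [mul_assoc, hvu, ← map_mul, inv_mul_cancel₀ hc'0, map_one]
  -- u' * w is a unit since it's close to u * w = 1
  have hdist : ‖u' - u‖ < min (r/2) (1/(‖w‖+1)) := by
    rw [Metric.mem_ball] at hu'
    rwa [← dist_eq_norm]
  have hsmall : ‖1 - u' * w‖ < 1 := by
    have : 1 - u' * w = (u - u') * w := by
      rw [sub_mul, huw]
    rw [this]
    have h2 : ‖(u - u') * w‖ ≤ ‖u - u'‖ * ‖w‖ := norm_mul_le _ _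
    have h3 : ‖u - u'‖ < 1/(‖w‖+1) := by
      rw [norm_sub_rev]
      exact lt_of_lt_of_le hdist (min_le_right _ _)
    have h4 : (0:ℝ) ≤ ‖w‖ := norm_nonneg _
    have h5 : (0:ℝ) ≤ ‖u - u'‖ := norm_nonneg _
    have h6 : (0:ℝ) < ‖w‖ + 1 := by linarith
    have h7 : ‖u - u'‖ * (‖w‖ + 1) < 1 := (lt_div_iff₀ h6).mp h3
    nlinarith
  set k : Aˣ := Units.oneSub (1 - u' * w) hsmall with hk
  have hkval : (k : A) = u' * w := by
    rw [hk, Units.val_oneSub, sub_sub_cancel]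
  -- right inverse of u'
  have hright : u' * (w * ↑k⁻¹) = 1 := by
    rw [← mul_assoc, ← hkval, k.mul_inv]
  -- the left and right inverses coincide, so u' is a unit
  have hcoin : algebraMap 𝕜 A c'⁻¹ * v' = w * ↑k⁻¹ := by
    calc algebraMap 𝕜 A c'⁻¹ * v'
        = (algebraMap 𝕜 A c'⁻¹ * v') * 1 := (mul_one _).symm
      _ = (algebraMap 𝕜 A c'⁻¹ * v') * (u' * (w * ↑k⁻¹)) := by rw [hright]
      _ = ((algebraMap 𝕜 A c'⁻¹ * v') * u') * (w * ↑k⁻¹) := (mul_assoc _ _ _).symm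
      _ = w * ↑k⁻¹ := by rw [hleft, one_mul]
  have hunit : IsUnit u' := ⟨⟨u', w * ↑k⁻¹, hright, by rw [← hcoin]; exact hleft⟩, rfl⟩
  refine ⟨u', ?_, hunit⟩
  rw [Metric.mem_ball]
  have d1 : dist u' u < r / 2 := lt_of_lt_of_le (by rwa [dist_eq_norm]) (min_le_left _ _)
  have d2 : dist u a < r / 2 := Metric.mem_ball.mp hu
  calc dist u' a ≤ dist u' u + dist u a := dist_triangle _ _ _
    _ < r / 2 + r / 2 := add_lt_add d1 d2
    _ = r := by ring
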